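/- Let P be the 3rd order, 3-dimensional stochastic tensor with all three frontal slices equal to [[1/2,1/3,1/3],[1/2,1/3,1/3],[0,1/3,1/3]] (so p_{i1 i2 i3} is independent of i3, p_{311} = p_{312} = p_{313} = 0, and all other entries are positive). Then every entry of P^2 is positive (so P is regular, hence ergodic), yet the reduced transition matrix Q of P has identically zero row indexed by the pair (3,1); consequently, for every k ≥ 1 and every pair (j1,j2), the ((3,1),(j1,j2)) entry of Q^k is 0, so the reduced first order chain is neither irreducible nor ergodic. Hence regularity and ergodicity of a higher order chain need not carry over to its reduced first order chain. -/

import Mathlib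

open Finset

/-- A 3rd order, `n`-dimensional tensor: entry `p_{i₁ i₂ i₃}` is `P i₁ i₂ i₃`. -/
abbrev Tensor3 (n : ℕ) := Fin n → Fin n → Fin n → ℝ

/-- The product `A ⊠ B`: `(A ⊠ B)_{i₁ i₂ i₃} = Σ_j a_{i₁ j i₂} b_{j i₂ i₃}`. -/
def tmul3 {n : ℕ} (A B : Tensor3 n) : Tensor3 n :=
  fun i₁ i₂ i₃ => ∑ j : Fin n, A i₁ j i₂ * B j i₂ i₃

/-- Tensor powers: `tpow3 P k` is `P^k`, with entries the `k`-step transition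
probabilities `p^{(k)}_{i₁ i₂ i₃}`; `P^0` is the identity tensor. -/
def tpow3 {n : ℕ} (P : Tensor3 n) : ℕ → Tensor3 n
  | 0 => fun i₁ i₂ _ => if i₁ = i₂ then 1 else 0
  | k + 1 => tmul3 (tpow3 P k) P

/-- `fpp3 P k` is the `(k+1)`-step first passage probability tensor `F^{[k+1]}`:
`f^{[1]} = p` and `f^{[k+1]}_{i₁ i₂ i₃} = Σ_{j ≠ i₁} f^{[k]}_{i₁ j i₂} p_{j i₂ i₃}`. -/
def fpp3 {n : ℕ} (P : Tensor3 n) : ℕ → Tensor3 n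
  | 0 => P
  | k + 1 => fun i₁ i₂ i₃ =>
      ∑ j ∈ Finset.univ.filter (fun j => j ≠ i₁), fpp3 P k i₁ j i₂ * P j i₂ i₃

/-- The ever-reaching probability `f_{i₁ i₂ i₃} = Σ_{k=1}^∞ f^{[k]}_{i₁ i₂ i₃}`. -/
noncomputable def everReach3 {n : ℕ} (P : Tensor3 n) : Tensor3 n :=
  fun i₁ i₂ i₃ => ∑' k : ℕ, fpp3 P k i₁ i₂ i₃

/-- State `j` is reachable from state `i` (`i → j`): for every `i₃` there is
`k ≥ 0` with `p^{(k)}_{j i i₃} > 0`. -/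
def Reach3 {n : ℕ} (P : Tensor3 n) (i j : Fin n) : Prop :=
  ∀ i₃ : Fin n, ∃ k : ℕ, 0 < tpow3 P k j i i₃

/-- The chain is irreducible: for every nonempty proper `K ⊊ S` there are
`i₁ ∈ K` and `i₂, i₃ ∉ K` with `p_{i₁ i₂ i₃} > 0`. -/
def Irreducible3 {n : ℕ} (P : Tensor3 n) : Prop :=
  ∀ K : Set (Fin n), K.Nonempty → K ≠ Set.univ →
    ∃ i₁ ∈ K, ∃ i₂, i₂ ∉ K ∧ ∃ i₃, i₃ ∉ K ∧ 0 < P i₁ i₂ i₃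

/-- The chain is ergodic: for all `i₁ i₂ i₃` there is `k ≥ 1` with `p^{(k)}_{i₁ i₂ i₃} > 0`. -/
def Ergodic3 {n : ℕ} (P : Tensor3 n) : Prop :=
  ∀ i₁ i₂ i₃ : Fin n, ∃ k : ℕ, 1 ≤ k ∧ 0 < tpow3 P k i₁ i₂ i₃

/-- The reduced transition matrix `Q` of a second order chain: rows and columns
are indexed by pairs, `Q (i₁,i₂) (j₁,j₂) = p_{i₁ i₂ j₂}` if `j₁ = i₂`, else `0`. -/
def reduced3 {n : ℕ} (P : Tensor3 n) : Matrix (Fin n × Fin n) (Fin n × Fin n) ℝ :=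
  fun u v => if v.1 = u.2 then P u.1 u.2 v.2 else 0

/-- The transition tensor of Statement 9: all three frontal slices equal
`[[1/2,1/3,1/3],[1/2,1/3,1/3],[0,1/3,1/3]]`. -/
noncomputable def P9 : Tensor3 3 := fun i₁ i₂ _ =>
  !![(1/2 : ℝ), 1/3, 1/3; 1/2, 1/3, 1/3; 0, 1/3, 1/3] i₁ i₂

/-- A (column stochastic) transition matrix is irreducible. -/
def MatIrreducible {s : Type*} (Q : Matrix s s ℝ) : Prop :=
  ∀ K : Set s, K.Nonempty → K ≠ Set.univ → ∃ a ∈ K, ∃ b, b ∉ K ∧ 0 < Q a b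

/-- A first order chain with transition matrix `Q` is ergodic. -/
def MatErgodic {s : Type*} [Fintype s] [DecidableEq s] (Q : Matrix s s ℝ) : Prop :=
  ∀ a b : s, ∃ k : ℕ, 1 ≤ k ∧ 0 < (Q ^ k) a b

/-- every entry of `P9²` is positive (so `P9` is regular, hence
ergodic), yet the reduced matrix `Q` has identically zero row `(3,1)` (index
`(2,0)`), hence `(Q^k) ((3,1), ·) = 0` for every `k ≥ 1`, and the reduced first
order chain is neither irreducible nor ergodic. -/
theorem regular_not_inherited :
    (∀ i₁ i₂ i₃ : Fin 3, 0 < tpow3 P9 2 i₁ i₂ i₃) ∧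
    (∀ c : Fin 3 × Fin 3, reduced3 P9 (2, 0) c = 0) ∧
    (∀ k : ℕ, 1 ≤ k → ∀ c : Fin 3 × Fin 3, (reduced3 P9 ^ k) (2, 0) c = 0) ∧
    ¬ MatIrreducible (reduced3 P9) ∧
    ¬ MatErgodic (reduced3 P9) := by
  have hrow : ∀ c : Fin 3 × Fin 3, reduced3 P9 (2, 0) c = 0 := by
    rintro ⟨c1, c2⟩
    simp only [reduced3, P9]
    split
    · fin_cases c2 <;> norm_num [Matrix.cons_val_zero, Matrix.cons_val_one, Matrix.cons_val_two, Matrix.vecHead, Matrix.vecTail]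
    · rfl
  have hpow : ∀ k : ℕ, 1 ≤ k → ∀ c : Fin 3 × Fin 3, (reduced3 P9 ^ k) (2, 0) c = 0 := by
    intro k hk
    induction k with
    | zero => omega
    | succ n ih =>
      intro c
      rcases Nat.eq_or_lt_of_le hk with h | h
      · rw [← h, pow_one]; exact hrow c
      · have hn : 1 ≤ n := by omega
        rw [pow_succ, Matrix.mul_apply]
        apply Finset.sum_eq_zero
        intro j _
        rw [ih hn j, zero_mul]
  refine ⟨?_, hrow, hpow, ?_, ?_⟩
  · intro i₁ i₂ i₃
    fin_cases i₁ <;> fin_cases i₂ <;> fin_cases i₃ <;>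
      norm_num [tpow3, tmul3, P9, Fin.sum_univ_three, Matrix.cons_val_two, Matrix.vecHead, Matrix.vecTail]
  · intro h
    obtain ⟨a, ha, b, _, hpos⟩ := h {(2, 0)} ⟨(2, 0), rfl⟩ (by
      intro he
      have : ((0 : Fin 3), (0 : Fin 3)) ∈ (Set.univ : Set (Fin 3 × Fin 3)) := trivial
      rw [← he] at this
      exact absurd (congrArg Prod.fst this) (by decide))
    rw [Set.mem_singleton_iff] at ha
    subst ha
    rw [hrow b] at hpos
    exact lt_irrefl 0 hpos
  · intro h
    obtain ⟨k, hk, hpos⟩ := h (2, 0) (2, 0)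
    rw [hpow k hk (2, 0)] at hpos
    exact lt_irrefl 0 hpos
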